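/- Minimax lower bound for linear bandits on the hypercube: let 0 < δ ≤ 1/3, let d ≥ 1 and K be positive integers with K ≥ d²/(2δ), and set Δ = √(δ/K)/(4√2). Then for every deterministic bandit algorithm, i.e., every collection of functions a_k : {0,1}^{k-1} → {−1,1}^d for k = 1, …, K, there exists μ* ∈ {−Δ, Δ}^d such that the expected pseudo-regret satisfies ∑_{r ∈ {0,1}^K} P_{μ*}(r) · ∑_{k=1}^K (dΔ − ⟨μ*, a_k(r_1,…,r_{k-1})⟩) ≥ d√(Kδ)/(8√2). -/

import Mathlib

open Matrix Finset

/-- The probability, under parameter `μ` and the deterministic algorithm `A`, of observing the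
Bernoulli reward sequence `r : Fin K → Bool`, where the mean reward of action `a` is
`δ + ⟨μ, a⟩`: `P_μ(r) = ∏_k q_k(r)^{r_k} (1 − q_k(r))^{1−r_k}` with
`q_k(r) = δ + ⟨μ, a_k(r_1,…,r_{k−1})⟩`. -/
noncomputable def banditLaw {d K : ℕ} (δ : ℝ)
    (A : (k : Fin K) → (Fin k.val → Bool) → (Fin d → ℝ)) (μ : Fin d → ℝ)
    (r : Fin K → Bool) : ℝ :=
  ∏ k : Fin K,
    (if r k then δ + μ ⬝ᵥ A k (fun j => r (Fin.castLE k.isLt.le j))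
     else 1 - (δ + μ ⬝ᵥ A k (fun j => r (Fin.castLE k.isLt.le j))))

lemma sum_prod_prefix_eq_one {K : ℕ} (g : (k : Fin K) → (Fin k.val → Bool) → Bool → ℝ)
    (hg : ∀ k h, g k h true + g k h false = 1) :
    ∑ r : Fin K → Bool, ∏ k : Fin K, g k (fun j => r (Fin.castLE k.isLt.le j)) (r k) = 1 := by
  induction K with
  | zero => simp
  | succ n ih =>
    rw [← (Fin.snocEquiv (fun _ => Bool)).sum_comp, Fintype.sum_prod_type]
    have key : ∀ (b : Bool) (s : Fin n → Bool),
        (∏ k : Fin (n+1), g k (fun j => (Fin.snocEquiv (fun _ => Bool)) (b, s) (Fin.castLE k.isLt.le j))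
            ((Fin.snocEquiv (fun _ => Bool)) (b, s) k))
        = (∏ k : Fin n, g k.castSucc (fun j => s (Fin.castLE k.isLt.le j)) (s k)) *
            g (Fin.last n) (fun j => s j) b := by
      intro b s
      simp only [Fin.snocEquiv_apply]
      rw [Fin.prod_univ_castSucc]
      congr 1
      · apply Finset.prod_congr rfl
        intro k _
        have h2 : ∀ (j : Fin (Fin.castSucc k).val),
            Fin.snoc (α := fun _ => Bool) s b (Fin.castLE (Fin.castSucc k).isLt.le j) = s (Fin.castLE k.isLt.le j) := by
          intro j
          have : (Fin.castLE (Fin.castSucc k).isLt.le j : Fin (n+1)) = Fin.castSucc (Fin.castLE k.isLt.le j) := rfl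
          rw [this, Fin.snoc_castSucc]
        rw [Fin.snoc_castSucc]
        exact congrFun (congrArg (g (Fin.castSucc k)) (funext h2)) (s k)
      · have h2 : ∀ (j : Fin (Fin.last n).val),
            Fin.snoc (α := fun _ => Bool) s b (Fin.castLE (Fin.last n).isLt.le j) = s j := by
          intro j
          have : (Fin.castLE (Fin.last n).isLt.le j : Fin (n+1)) = Fin.castSucc j := rfl
          rw [this, Fin.snoc_castSucc]
        rw [Fin.snoc_last]
        exact congrFun (congrArg (g (Fin.last n)) (funext h2)) b
    simp only [key]
    rw [Finset.sum_comm]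
    have step : ∀ s : Fin n → Bool, ∑ b : Bool,
        (∏ k : Fin n, g k.castSucc (fun j => s (Fin.castLE k.isLt.le j)) (s k)) *
          g (Fin.last n) (fun j => s j) b
        = ∏ k : Fin n, g k.castSucc (fun j => s (Fin.castLE k.isLt.le j)) (s k) := by
      intro s
      rw [Fintype.sum_bool, ← mul_add, hg (Fin.last n) (fun j => s j), mul_one]
    simp only [step]
    exact ih (fun k => g k.castSucc) (fun k h => hg k.castSucc h)


lemma le_sum_prod_prefix {K : ℕ} (c : ℝ) (hc : 0 ≤ c)
    (g : (k : Fin K) → (Fin k.val → Bool) → Bool → ℝ)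
    (hg0 : ∀ k h b, 0 ≤ g k h b)
    (hgc : ∀ k h, c ≤ g k h true + g k h false) :
    c ^ K ≤ ∑ r : Fin K → Bool, ∏ k : Fin K, g k (fun j => r (Fin.castLE k.isLt.le j)) (r k) := by
  induction K with
  | zero => simp
  | succ n ih =>
    rw [← (Fin.snocEquiv (fun _ => Bool)).sum_comp, Fintype.sum_prod_type]
    have key : ∀ (b : Bool) (s : Fin n → Bool),
        (∏ k : Fin (n+1), g k (fun j => (Fin.snocEquiv (fun _ => Bool)) (b, s) (Fin.castLE k.isLt.le j))
            ((Fin.snocEquiv (fun _ => Bool)) (b, s) k))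
        = (∏ k : Fin n, g k.castSucc (fun j => s (Fin.castLE k.isLt.le j)) (s k)) *
            g (Fin.last n) (fun j => s j) b := by
      intro b s
      simp only [Fin.snocEquiv_apply]
      rw [Fin.prod_univ_castSucc]
      congr 1
      · apply Finset.prod_congr rfl
        intro k _
        have h2 : ∀ (j : Fin (Fin.castSucc k).val),
            Fin.snoc (α := fun _ => Bool) s b (Fin.castLE (Fin.castSucc k).isLt.le j) = s (Fin.castLE k.isLt.le j) := by
          intro j
          have : (Fin.castLE (Fin.castSucc k).isLt.le j : Fin (n+1)) = Fin.castSucc (Fin.castLE k.isLt.le j) := rfl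
          rw [this, Fin.snoc_castSucc]
        rw [Fin.snoc_castSucc]
        exact congrFun (congrArg (g (Fin.castSucc k)) (funext h2)) (s k)
      · have h2 : ∀ (j : Fin (Fin.last n).val),
            Fin.snoc (α := fun _ => Bool) s b (Fin.castLE (Fin.last n).isLt.le j) = s j := by
          intro j
          have : (Fin.castLE (Fin.last n).isLt.le j : Fin (n+1)) = Fin.castSucc j := rfl
          rw [this, Fin.snoc_castSucc]
        rw [Fin.snoc_last]
        exact congrFun (congrArg (g (Fin.last n)) (funext h2)) b
    simp only [key]
    rw [Finset.sum_comm]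
    have hCnn : ∀ s : Fin n → Bool,
        0 ≤ ∏ k : Fin n, g k.castSucc (fun j => s (Fin.castLE k.isLt.le j)) (s k) :=
      fun s => Finset.prod_nonneg fun k _ => hg0 _ _ _
    have step : ∀ s : Fin n → Bool,
        (∏ k : Fin n, g k.castSucc (fun j => s (Fin.castLE k.isLt.le j)) (s k)) * c ≤
        ∑ b : Bool,
        (∏ k : Fin n, g k.castSucc (fun j => s (Fin.castLE k.isLt.le j)) (s k)) *
          g (Fin.last n) (fun j => s j) b := by
      intro s
      rw [Fintype.sum_bool, ← mul_add]
      exact mul_le_mul_of_nonneg_left (hgc (Fin.last n) (fun j => s j)) (hCnn s)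
    calc c ^ (n+1) = c ^ n * c := by ring
    _ ≤ (∑ s : Fin n → Bool, ∏ k : Fin n, g k.castSucc (fun j => s (Fin.castLE k.isLt.le j)) (s k)) * c := by
        apply mul_le_mul_of_nonneg_right _ hc
        exact ih (fun k => g k.castSucc) (fun k h b => hg0 k.castSucc h b) (fun k h => hgc k.castSucc h)
    _ = ∑ s : Fin n → Bool, (∏ k : Fin n, g k.castSucc (fun j => s (Fin.castLE k.isLt.le j)) (s k)) * c := by
        rw [Finset.sum_mul]
    _ ≤ _ := Finset.sum_le_sum fun s _ => step s

lemma sqrt_prod' {ι : Type*} (s : Finset ι) (f : ι → ℝ) (hf : ∀ i ∈ s, 0 ≤ f i) :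
    Real.sqrt (∏ i ∈ s, f i) = ∏ i ∈ s, Real.sqrt (f i) := by
  induction s using Finset.cons_induction with
  | empty => simp
  | cons a s ha ih =>
    rw [Finset.prod_cons, Finset.prod_cons, Real.sqrt_mul (hf a (Finset.mem_cons_self a s)),
      ih (fun i hi => hf i (Finset.mem_cons.mpr (Or.inr hi)))]

lemma bc_step (δ q q' E : ℝ) (hδ0 : 0 < δ)
    (hq1 : 3*δ/4 ≤ q) (hq2 : q ≤ 5/12) (hq'1 : 3*δ/4 ≤ q') (hq'2 : q' ≤ 5/12)
    (hE : (q - q')^2 ≤ E) :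
    1 - (2*E/(3*δ) + E) ≤ Real.sqrt (q*q') + Real.sqrt ((1-q)*(1-q')) := by
  have hq0 : 0 ≤ q := by linarith
  have hq'0 : 0 ≤ q' := by linarith
  have h1q : (0:ℝ) ≤ 1 - q := by linarith
  have h1q' : (0:ℝ) ≤ 1 - q' := by linarith
  set a := Real.sqrt q with hadef
  set a' := Real.sqrt q' with ha'def
  set b := Real.sqrt (1-q) with hbdef
  set b' := Real.sqrt (1-q') with hb'def
  have ha : a^2 = q := Real.sq_sqrt hq0
  have ha' : a'^2 = q' := Real.sq_sqrt hq'0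
  have hb : b^2 = 1 - q := Real.sq_sqrt h1q
  have hb' : b'^2 = 1 - q' := Real.sq_sqrt h1q'
  have ha0 : 0 ≤ a := Real.sqrt_nonneg _
  have ha'0 : 0 ≤ a' := Real.sqrt_nonneg _
  have hb0 : 0 ≤ b := Real.sqrt_nonneg _
  have hb'0 : 0 ≤ b' := Real.sqrt_nonneg _
  rw [Real.sqrt_mul hq0, Real.sqrt_mul h1q]
  rw [← hadef, ← ha'def, ← hbdef, ← hb'def]
  -- identity
  have hid : (a - a')^2 + (b - b')^2 = 2 - 2*(a*a' + b*b') := by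
    have e1 : (a-a')^2 = q + q' - 2*(a*a') := by rw [← ha, ← ha']; ring
    have e2 : (b-b')^2 = (1-q) + (1-q') - 2*(b*b') := by rw [← hb, ← hb']; ring
    linarith
  have hA2 : (a - a')^2 * (q + q') ≤ (q - q')^2 := by
    rw [← ha, ← ha']
    nlinarith [mul_nonneg (mul_nonneg ha0 ha'0) (sq_nonneg (a - a'))]
  have hB2 : (b - b')^2 * ((1-q) + (1-q')) ≤ (q - q')^2 := by
    have e1 : (1:ℝ) - q = b^2 := hb.symm
    have e2 : (1:ℝ) - q' = b'^2 := hb'.symm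
    have e3 : (q - q')^2 = (b'^2 - b^2)^2 := by rw [hb, hb']; ring
    rw [e1, e2, e3]
    nlinarith [mul_nonneg (mul_nonneg hb0 hb'0) (sq_nonneg (b - b'))]
  have hE0 : 0 ≤ E := le_trans (sq_nonneg _) hE
  have hAB : (a - a')^2 ≤ 2*E/(3*δ) := by
    rw [le_div_iff₀ (by linarith : (0:ℝ) < 3*δ)]
    calc (a - a')^2 * (3*δ) ≤ (a - a')^2 * (2*(q + q')) :=
          mul_le_mul_of_nonneg_left (by linarith) (sq_nonneg _)
    _ = 2*((a - a')^2 * (q + q')) := by ring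
    _ ≤ 2*(q - q')^2 := by linarith
    _ ≤ 2*E := by linarith
  have hBB : (b - b')^2 ≤ E := by
    calc (b - b')^2 = (b - b')^2 * 1 := by ring
    _ ≤ (b - b')^2 * ((1-q) + (1-q')) := mul_le_mul_of_nonneg_left (by linarith) (sq_nonneg _)
    _ ≤ (q - q')^2 := hB2
    _ ≤ E := hE
  have hdiv0 : 0 ≤ 2*E/(3*δ) := by positivity
  linarith

lemma l1_le_of_bc {R : Type*} [Fintype R] (P Q : R → ℝ)
    (hP0 : ∀ r, 0 ≤ P r) (hQ0 : ∀ r, 0 ≤ Q r)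
    (hP1 : ∑ r, P r = 1) (hQ1 : ∑ r, Q r = 1)
    (hBC : 1 - 1/8 ≤ ∑ r, Real.sqrt (P r * Q r)) :
    ∑ r, |P r - Q r| ≤ 1 := by
  set B := ∑ r, Real.sqrt (P r * Q r) with hBdef
  have hsq : ∀ r, Real.sqrt (P r) ^ 2 = P r := fun r => Real.sq_sqrt (hP0 r)
  have hsq' : ∀ r, Real.sqrt (Q r) ^ 2 = Q r := fun r => Real.sq_sqrt (hQ0 r)
  have hmul : ∀ r, Real.sqrt (P r * Q r) = Real.sqrt (P r) * Real.sqrt (Q r) :=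
    fun r => Real.sqrt_mul (hP0 r) _
  have hBle : B ≤ 1 := by
    rw [hBdef]
    calc ∑ r, Real.sqrt (P r * Q r) ≤ ∑ r, (P r + Q r)/2 := by
          apply Finset.sum_le_sum
          intro r _
          rw [hmul r]
          nlinarith [sq_nonneg (Real.sqrt (P r) - Real.sqrt (Q r)), hsq r, hsq' r]
    _ = 1 := by rw [← Finset.sum_div, Finset.sum_add_distrib, hP1, hQ1]; norm_num
  have h1 : ∑ r, (Real.sqrt (P r) - Real.sqrt (Q r))^2 = 2 - 2*B := by
    have : ∀ r, (Real.sqrt (P r) - Real.sqrt (Q r))^2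
        = P r + Q r - 2 * Real.sqrt (P r * Q r) := by
      intro r
      rw [hmul r]
      nlinarith [hsq r, hsq' r]
    rw [Finset.sum_congr rfl fun r _ => this r]
    rw [Finset.sum_sub_distrib, Finset.sum_add_distrib, hP1, hQ1, ← Finset.mul_sum, ← hBdef]
    ring
  have h2 : ∑ r, (Real.sqrt (P r) + Real.sqrt (Q r))^2 = 2 + 2*B := by
    have : ∀ r, (Real.sqrt (P r) + Real.sqrt (Q r))^2
        = P r + Q r + 2 * Real.sqrt (P r * Q r) := by
      intro r
      rw [hmul r]
      nlinarith [hsq r, hsq' r]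
    rw [Finset.sum_congr rfl fun r _ => this r]
    rw [Finset.sum_add_distrib, Finset.sum_add_distrib, hP1, hQ1, ← Finset.mul_sum, ← hBdef]
    ring
  have habs : ∀ r, |P r - Q r| = |Real.sqrt (P r) - Real.sqrt (Q r)| * (Real.sqrt (P r) + Real.sqrt (Q r)) := by
    intro r
    have : P r - Q r = (Real.sqrt (P r) - Real.sqrt (Q r)) * (Real.sqrt (P r) + Real.sqrt (Q r)) := by
      nlinarith [hsq r, hsq' r]
    rw [this, abs_mul]
    congr 1
    exact abs_of_nonneg (by positivity)
  have hCS := Finset.sum_mul_sq_le_sq_mul_sq Finset.univ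
    (fun r => |Real.sqrt (P r) - Real.sqrt (Q r)|) (fun r => Real.sqrt (P r) + Real.sqrt (Q r))
  have hsum_eq : ∑ r, |P r - Q r|
      = ∑ r, |Real.sqrt (P r) - Real.sqrt (Q r)| * (Real.sqrt (P r) + Real.sqrt (Q r)) :=
    Finset.sum_congr rfl fun r _ => habs r
  have habs_sq : ∑ r, |Real.sqrt (P r) - Real.sqrt (Q r)|^2 = 2 - 2*B := by
    rw [← h1]
    exact Finset.sum_congr rfl fun r _ => sq_abs _
  have hfinal : (∑ r, |P r - Q r|)^2 ≤ (2 - 2*B) * (2 + 2*B) := by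
    rw [hsum_eq, ← habs_sq, ← h2]
    exact hCS
  have hnn : 0 ≤ ∑ r, |P r - Q r| := Finset.sum_nonneg fun r _ => abs_nonneg _
  nlinarith [hfinal, hnn, hBle, hBC]

lemma exp_diff_le {R : Type*} [Fintype R] (P Q f : R → ℝ) (B : ℝ) (hB : 0 ≤ B)
    (hP1 : ∑ r, P r = 1) (hQ1 : ∑ r, Q r = 1)
    (hf0 : ∀ r, 0 ≤ f r) (hfB : ∀ r, f r ≤ B)
    (hPQ : ∑ r, |P r - Q r| ≤ 1) :
    ∑ r, Q r * f r - ∑ r, P r * f r ≤ B/2 := by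
  have key : ∑ r, Q r * f r - ∑ r, P r * f r = ∑ r, (Q r - P r) * (f r - B/2) := by
    have : ∀ r, (Q r - P r) * (f r - B/2)
        = Q r * f r - P r * f r - (B/2) * Q r + (B/2) * P r := fun r => by ring
    rw [Finset.sum_congr rfl fun r _ => this r]
    rw [Finset.sum_add_distrib, Finset.sum_sub_distrib, Finset.sum_sub_distrib,
      ← Finset.mul_sum, ← Finset.mul_sum, hP1, hQ1]
    ring
  rw [key]
  calc ∑ r, (Q r - P r) * (f r - B/2) ≤ ∑ r, |Q r - P r| * (B/2) := by
        apply Finset.sum_le_sum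
        intro r _
        calc (Q r - P r) * (f r - B/2) ≤ |(Q r - P r) * (f r - B/2)| := le_abs_self _
        _ = |Q r - P r| * |f r - B/2| := abs_mul _ _
        _ ≤ |Q r - P r| * (B/2) := by
            apply mul_le_mul_of_nonneg_left _ (abs_nonneg _)
            rw [abs_le]
            constructor <;> [linarith [hf0 r]; linarith [hfB r]]
  _ = (∑ r, |Q r - P r|) * (B/2) := by rw [Finset.sum_mul]
  _ ≤ 1 * (B/2) := by
      apply mul_le_mul_of_nonneg_right _ (by linarith)
      calc ∑ r, |Q r - P r| = ∑ r, |P r - Q r| := Finset.sum_congr rfl fun r _ => abs_sub_comm _ _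
      _ ≤ 1 := hPQ
  _ = B/2 := by ring

set_option maxHeartbeats 2000000 in
/-- Minimax lower bound for linear bandits on the hypercube: for every deterministic algorithm
there is a parameter `μ* ∈ {−Δ, Δ}^d` whose expected pseudo-regret is at least
`d√(Kδ)/(8√2)`. -/
theorem statement12 (d K : ℕ) (hd : 1 ≤ d) (hK : 1 ≤ K) (δ Δ : ℝ)
    (hδ0 : 0 < δ) (hδ1 : δ ≤ 1 / 3) (hKd : (d : ℝ) ^ 2 / (2 * δ) ≤ (K : ℝ))
    (hΔ : Δ = Real.sqrt (δ / (K : ℝ)) / (4 * Real.sqrt 2))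
    (A : (k : Fin K) → (Fin k.val → Bool) → (Fin d → ℝ))
    (hA : ∀ k h i, A k h i = 1 ∨ A k h i = -1) :
    ∃ μ : Fin d → ℝ, (∀ i, μ i = Δ ∨ μ i = -Δ) ∧
      (d : ℝ) * Real.sqrt ((K : ℝ) * δ) / (8 * Real.sqrt 2) ≤
        ∑ r : Fin K → Bool, banditLaw δ A μ r *
          ∑ k : Fin K,
            ((d : ℝ) * Δ - μ ⬝ᵥ A k (fun j => r (Fin.castLE k.isLt.le j))) := by
  classical
  have hK0 : (0:ℝ) < K := by exact_mod_cast hK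
  have hK1 : (1:ℝ) ≤ K := by exact_mod_cast hK
  have hd0 : (0:ℝ) < d := by exact_mod_cast hd
  have hs2 : (0:ℝ) < Real.sqrt 2 := Real.sqrt_pos.mpr (by norm_num)
  have hΔ0 : 0 < Δ := by
    rw [hΔ]; exact div_pos (Real.sqrt_pos.mpr (div_pos hδ0 hK0)) (by positivity)
  have h42 : (4*Real.sqrt 2)^2 = 32 := by
    rw [mul_pow, Real.sq_sqrt (by norm_num : (0:ℝ) ≤ 2)]; norm_num
  have hΔsq : Δ^2 = δ/(32*K) := by
    rw [hΔ, div_pow, h42, Real.sq_sqrt (le_of_lt (div_pos hδ0 hK0)), div_div, mul_comm (K:ℝ) 32]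
  have hdΔ : (d:ℝ)*Δ ≤ δ/4 := by
    have hd2 : (d:ℝ)^2 ≤ 2*δ*K := by
      rw [div_le_iff₀ (by positivity)] at hKd; linarith
    have hsq : ((d:ℝ)*Δ)^2 ≤ (δ/4)^2 := by
      have e : ((d:ℝ)*Δ)^2 = ((d:ℝ)^2*δ)/(32*K) := by rw [mul_pow, hΔsq]; ring
      have e2 : (δ/4)^2 = δ^2/16 := by ring
      rw [e, e2, div_le_div_iff₀ (by positivity) (by positivity)]
      nlinarith [mul_le_mul_of_nonneg_right hd2 hδ0.le]
    calc (d:ℝ)*Δ = Real.sqrt (((d:ℝ)*Δ)^2) := (Real.sqrt_sq (by positivity)).symm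
    _ ≤ Real.sqrt ((δ/4)^2) := Real.sqrt_le_sqrt hsq
    _ = δ/4 := Real.sqrt_sq (by positivity)
  -- the hypercube parameters
  set μf : (Fin d → Bool) → Fin d → ℝ := fun s i => if s i then Δ else -Δ with hμf
  have hμabs : ∀ s i, |μf s i| = Δ := by
    intro s i
    by_cases h : s i <;> simp [hμf, h, abs_of_pos hΔ0]
  have hμsq : ∀ s i, (μf s i)^2 = Δ^2 := by
    intro s i; by_cases h : s i <;> simp [hμf, h]
  have hdot : ∀ s k (h : Fin k.val → Bool), |μf s ⬝ᵥ A k h| ≤ (d:ℝ)*Δ := by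
    intro s k h
    calc |μf s ⬝ᵥ A k h| = |∑ i, μf s i * A k h i| := rfl
    _ ≤ ∑ i, |μf s i * A k h i| := Finset.abs_sum_le_sum_abs _ _
    _ = ∑ _i : Fin d, Δ := Finset.sum_congr rfl (fun i _ => by
        rw [abs_mul, hμabs]
        rcases hA k h i with h1 | h1 <;> rw [h1] <;> norm_num)
    _ = (d:ℝ)*Δ := by rw [Finset.sum_const, Finset.card_univ, Fintype.card_fin, nsmul_eq_mul]
  have hq : ∀ s k (h : Fin k.val → Bool),
      3*δ/4 ≤ δ + μf s ⬝ᵥ A k h ∧ δ + μf s ⬝ᵥ A k h ≤ 5/12 := by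
    intro s k h
    have := abs_le.mp (hdot s k h)
    constructor
    · linarith [this.1, hdΔ]
    · linarith [this.2, hdΔ, hδ1]
  have hfac0 : ∀ s k (h : Fin k.val → Bool) (b : Bool),
      0 ≤ (if b then δ + μf s ⬝ᵥ A k h else 1 - (δ + μf s ⬝ᵥ A k h)) := by
    intro s k h b
    rcases hq s k h with ⟨h1, h2⟩
    cases b <;> simp <;> linarith
  -- probability facts
  have hP1 : ∀ s, ∑ r : Fin K → Bool, banditLaw δ A (μf s) r = 1 := by
    intro s
    have := sum_prod_prefix_eq_one
      (fun k h b => if b then δ + μf s ⬝ᵥ A k h else 1 - (δ + μf s ⬝ᵥ A k h))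
      (fun k h => by simp)
    simpa [banditLaw] using this
  have hP0 : ∀ s r, 0 ≤ banditLaw δ A (μf s) r := by
    intro s r
    apply Finset.prod_nonneg
    intro k _
    exact hfac0 s k _ (r k)
  -- flipping one coordinate
  set flip : Fin d → (Fin d → Bool) → (Fin d → Bool) :=
    fun i s => Function.update s i (!s i) with hflip
  have hflipinv : ∀ i, Function.Involutive (flip i) := by
    intro i s
    simp only [hflip]
    funext j
    by_cases h : j = i
    · subst h; simp
    · simp [Function.update_of_ne h]
  have hflipμ : ∀ s i, μf (flip i s) i = -(μf s i) := by
    intro s i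
    by_cases h : s i <;> simp [hμf, hflip, h]
  have hflipμ' : ∀ s i j, j ≠ i → μf (flip i s) j = μf s j := by
    intro s i j hj
    simp [hμf, hflip, Function.update_of_ne hj]
  have hqdiff : ∀ s i k (h : Fin k.val → Bool),
      ((δ + μf s ⬝ᵥ A k h) - (δ + μf (flip i s) ⬝ᵥ A k h))^2 ≤ 4*Δ^2 := by
    intro s i k h
    have hX : μf s ⬝ᵥ A k h = ∑ j, μf s j * A k h j := rfl
    have hY : μf (flip i s) ⬝ᵥ A k h = ∑ j, μf (flip i s) j * A k h j := rfl
    have hsub : ∑ j, (μf s j - μf (flip i s) j) * A k h j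
        = (∑ j, μf s j * A k h j) - ∑ j, μf (flip i s) j * A k h j := by
      rw [← Finset.sum_sub_distrib]
      exact Finset.sum_congr rfl fun j _ => by ring
    have e2 : ∑ j, (μf s j - μf (flip i s) j) * A k h j
        = (μf s i - μf (flip i s) i) * A k h i :=
      Finset.sum_eq_single i (fun j _ hj => by rw [hflipμ' s i j hj]; ring)
        (fun hi => absurd (Finset.mem_univ i) hi)
    have e3 : (μf s i - μf (flip i s) i) * A k h i = 2 * μf s i * A k h i := by
      rw [hflipμ]; ring
    have e1 : (δ + μf s ⬝ᵥ A k h) - (δ + μf (flip i s) ⬝ᵥ A k h)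
        = 2 * μf s i * A k h i := by
      rw [hX, hY]; linarith [hsub, e2, e3]
    rw [e1]
    have := hμsq s i
    rcases hA k h i with h1 | h1 <;> rw [h1] <;> nlinarith
  -- Bhattacharyya bound for a flipped pair
  have hBC : ∀ s i, 1 - 1/8 ≤
      ∑ r : Fin K → Bool, Real.sqrt (banditLaw δ A (μf s) r * banditLaw δ A (μf (flip i s)) r) := by
    intro s i
    set g : (k : Fin K) → (Fin k.val → Bool) → Bool → ℝ := fun k h b =>
      Real.sqrt ((if b then δ + μf s ⬝ᵥ A k h else 1 - (δ + μf s ⬝ᵥ A k h)) *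
        (if b then δ + μf (flip i s) ⬝ᵥ A k h else 1 - (δ + μf (flip i s) ⬝ᵥ A k h))) with hg
    have hrw : ∀ r : Fin K → Bool,
        Real.sqrt (banditLaw δ A (μf s) r * banditLaw δ A (μf (flip i s)) r)
        = ∏ k : Fin K, g k (fun j => r (Fin.castLE k.isLt.le j)) (r k) := by
      intro r
      have hprod : banditLaw δ A (μf s) r * banditLaw δ A (μf (flip i s)) r
          = ∏ k : Fin K,
            ((if r k then δ + μf s ⬝ᵥ A k (fun j => r (Fin.castLE k.isLt.le j))
              else 1 - (δ + μf s ⬝ᵥ A k (fun j => r (Fin.castLE k.isLt.le j)))) *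
             (if r k then δ + μf (flip i s) ⬝ᵥ A k (fun j => r (Fin.castLE k.isLt.le j))
              else 1 - (δ + μf (flip i s) ⬝ᵥ A k (fun j => r (Fin.castLE k.isLt.le j))))) := by
        unfold banditLaw
        rw [← Finset.prod_mul_distrib]
      rw [hprod, sqrt_prod']
      intro k _
      exact mul_nonneg (hfac0 s k _ (r k)) (hfac0 (flip i s) k _ (r k))
    rw [Finset.sum_congr rfl fun r _ => hrw r]
    have hc0 : (0:ℝ) ≤ 1 - 1/(8*K) := by
      rw [sub_nonneg, div_le_one (by positivity)]
      linarith
    have hgc : ∀ k (h : Fin k.val → Bool), 1 - 1/(8*(K:ℝ)) ≤ g k h true + g k h false := by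
      intro k h
      have hbs := bc_step δ (δ + μf s ⬝ᵥ A k h) (δ + μf (flip i s) ⬝ᵥ A k h) (4*Δ^2) hδ0
        (hq s k h).1 (hq s k h).2 (hq (flip i s) k h).1 (hq (flip i s) k h).2 (hqdiff s i k h)
      have hnum : 2*(4*Δ^2)/(3*δ) + 4*Δ^2 ≤ 1/(8*(K:ℝ)) := by
        have e1 : 2*(4*Δ^2)/(3*δ) = 1/(12*(K:ℝ)) := by
          rw [hΔsq]; field_simp; ring
        have e2 : 4*Δ^2 ≤ 1/(24*(K:ℝ)) := by
          rw [hΔsq]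
          have e2' : 4*(δ/(32*(K:ℝ))) = δ/(8*(K:ℝ)) := by ring
          rw [e2', div_le_div_iff₀ (by positivity) (by positivity)]
          nlinarith
        have e3 : 1/(12*(K:ℝ)) + 1/(24*(K:ℝ)) = 1/(8*(K:ℝ)) := by
          rw [div_add_div _ _ (by positivity) (by positivity), div_eq_div_iff (by positivity) (by positivity)]
          ring
        linarith
      have : g k h true + g k h false
          = Real.sqrt ((δ + μf s ⬝ᵥ A k h) * (δ + μf (flip i s) ⬝ᵥ A k h))
            + Real.sqrt ((1 - (δ + μf s ⬝ᵥ A k h)) * (1 - (δ + μf (flip i s) ⬝ᵥ A k h))) := by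
        simp [hg]
      rw [this]
      linarith
    have hmain := le_sum_prod_prefix (1 - 1/(8*(K:ℝ))) hc0 g
      (fun k h b => Real.sqrt_nonneg _) hgc
    have hpow : 1 - 1/8 ≤ (1 - 1/(8*(K:ℝ)))^K := by
      have := one_add_mul_le_pow (a := -(1/(8*(K:ℝ)))) (by
        have : 0 ≤ 1/(8*(K:ℝ)) := by positivity
        linarith) K
      have heq : (K:ℝ) * (1/(8*(K:ℝ))) = 1/8 := by field_simp
      have heq2 : (1 + -(1/(8*(K:ℝ)))) = 1 - 1/(8*(K:ℝ)) := by ring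
      rw [heq2] at this
      calc (1:ℝ) - 1/8 = 1 + (K:ℝ) * (-(1/(8*(K:ℝ)))) := by rw [mul_neg, heq]; ring
      _ ≤ (1 - 1/(8*(K:ℝ)))^K := this
    exact hpow.trans hmain
  -- total variation bound
  have hTV : ∀ s i, ∑ r : Fin K → Bool,
      |banditLaw δ A (μf s) r - banditLaw δ A (μf (flip i s)) r| ≤ 1 := by
    intro s i
    exact l1_le_of_bc _ _ (hP0 s) (hP0 (flip i s)) (hP1 s) (hP1 (flip i s)) (hBC s i)
  -- per-coordinate regret functions
  set f : (Fin d → Bool) → Fin d → (Fin K → Bool) → ℝ := fun s i r =>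
    ∑ k : Fin K, (Δ - μf s i * A k (fun j => r (Fin.castLE k.isLt.le j)) i) with hf
  have habs_term : ∀ s i k (r : Fin K → Bool),
      |μf s i * A k (fun j => r (Fin.castLE k.isLt.le j)) i| = Δ := by
    intro s i k r
    rw [abs_mul, hμabs]
    rcases hA k (fun j => r (Fin.castLE k.isLt.le j)) i with h1 | h1 <;> rw [h1] <;> norm_num
  have hf0 : ∀ s i r, 0 ≤ f s i r := by
    intro s i r
    apply Finset.sum_nonneg
    intro k _
    have := abs_le.mp (le_of_eq (habs_term s i k r))
    linarith [this.2]
  have hfB : ∀ s i r, f s i r ≤ 2*K*Δ := by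
    intro s i r
    calc f s i r ≤ ∑ _k : Fin K, 2*Δ := by
          apply Finset.sum_le_sum
          intro k _
          have := abs_le.mp (le_of_eq (habs_term s i k r))
          linarith [this.1]
    _ = 2*K*Δ := by rw [Finset.sum_const, Finset.card_univ, Fintype.card_fin, nsmul_eq_mul]; ring
  have hplus : ∀ s i r, f (flip i s) i r = 2*K*Δ - f s i r := by
    intro s i r
    have : ∀ k : Fin K, (Δ - μf (flip i s) i * A k (fun j => r (Fin.castLE k.isLt.le j)) i)
        = 2*Δ - (Δ - μf s i * A k (fun j => r (Fin.castLE k.isLt.le j)) i) := by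
      intro k
      rw [hflipμ]
      ring
    rw [hf]
    simp only []
    rw [Finset.sum_congr rfl fun k _ => this k, Finset.sum_sub_distrib, Finset.sum_const,
      Finset.card_univ, Fintype.card_fin, nsmul_eq_mul]
    have : f s i r = ∑ k : Fin K, (Δ - μf s i * A k (fun j => r (Fin.castLE k.isLt.le j)) i) := rfl
    rw [← this]
    ring
  -- expected per-coordinate regret
  set T : (Fin d → Bool) → Fin d → ℝ := fun s i =>
    ∑ r : Fin K → Bool, banditLaw δ A (μf s) r * f s i r with hT
  have hpair : ∀ s i, (K:ℝ)*Δ ≤ T s i + T (flip i s) i := by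
    intro s i
    have e : T (flip i s) i
        = 2*K*Δ - ∑ r : Fin K → Bool, banditLaw δ A (μf (flip i s)) r * f s i r := by
      rw [hT]
      simp only []
      rw [Finset.sum_congr rfl fun r _ => by rw [hplus s i r]]
      rw [Finset.sum_congr rfl fun r _ => (by ring :
        banditLaw δ A (μf (flip i s)) r * (2*K*Δ - f s i r)
        = 2*K*Δ * banditLaw δ A (μf (flip i s)) r - banditLaw δ A (μf (flip i s)) r * f s i r)]
      rw [Finset.sum_sub_distrib, ← Finset.mul_sum, hP1]
      ring
    have hdiff := exp_diff_le (banditLaw δ A (μf s)) (banditLaw δ A (μf (flip i s))) (f s i)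
      (2*K*Δ) (by positivity) (hP1 s) (hP1 (flip i s)) (hf0 s i) (hfB s i) (hTV s i)
    have hTsi : T s i = ∑ r : Fin K → Bool, banditLaw δ A (μf s) r * f s i r := rfl
    rw [e, hTsi]
    linarith
  -- total regret
  set R : (Fin d → Bool) → ℝ := fun s =>
    ∑ r : Fin K → Bool, banditLaw δ A (μf s) r *
      ∑ k : Fin K, ((d:ℝ)*Δ - μf s ⬝ᵥ A k (fun j => r (Fin.castLE k.isLt.le j))) with hR
  have hRT : ∀ s, R s = ∑ i, T s i := by
    intro s
    have hreg : ∀ r : Fin K → Bool,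
        ∑ k : Fin K, ((d:ℝ)*Δ - μf s ⬝ᵥ A k (fun j => r (Fin.castLE k.isLt.le j)))
        = ∑ i, f s i r := by
      intro r
      have e1 : ∀ k : Fin K, ((d:ℝ)*Δ - μf s ⬝ᵥ A k (fun j => r (Fin.castLE k.isLt.le j)))
          = ∑ i, (Δ - μf s i * A k (fun j => r (Fin.castLE k.isLt.le j)) i) := by
        intro k
        rw [Finset.sum_sub_distrib, Finset.sum_const, Finset.card_univ, Fintype.card_fin,
          nsmul_eq_mul]
        rfl
      rw [Finset.sum_congr rfl fun k _ => e1 k, Finset.sum_comm]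
    rw [hR, hT]
    simp only []
    rw [Finset.sum_congr rfl fun r _ => by rw [hreg r, Finset.mul_sum]]
    exact Finset.sum_comm
  have hcard : (Finset.univ : Finset (Fin d → Bool)).card = 2^d := by
    simp [Finset.card_univ]
  -- averaging
  have havg : (2^d : ℝ) * ((d:ℝ)*K*Δ/2) ≤ ∑ s : Fin d → Bool, R s := by
    rw [Finset.sum_congr rfl fun s _ => hRT s, Finset.sum_comm]
    have hper : ∀ i : Fin d, (2^d : ℝ) * ((K:ℝ)*Δ/2) ≤ ∑ s : Fin d → Bool, T s i := by
      intro i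
      have hswap : ∑ s : Fin d → Bool, T (flip i s) i = ∑ s : Fin d → Bool, T s i := by
        exact Equiv.sum_comp ((hflipinv i).toPerm (flip i)) (fun s => T s i)
      have h2 : (2^d : ℝ) * ((K:ℝ)*Δ)
          ≤ ∑ s : Fin d → Bool, (T s i + T (flip i s) i) := by
        calc (2^d : ℝ) * ((K:ℝ)*Δ) = ∑ _s : Fin d → Bool, (K:ℝ)*Δ := by
              rw [Finset.sum_const, hcard, nsmul_eq_mul]; push_cast; ring
        _ ≤ _ := Finset.sum_le_sum fun s _ => hpair s i
      rw [Finset.sum_add_distrib, hswap] at h2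
      linarith
    calc (2^d : ℝ) * ((d:ℝ)*K*Δ/2) = ∑ _i : Fin d, (2^d : ℝ) * ((K:ℝ)*Δ/2) := by
          rw [Finset.sum_const, Finset.card_univ, Fintype.card_fin, nsmul_eq_mul]; ring
    _ ≤ _ := Finset.sum_le_sum fun i _ => hper i
  -- extract a good parameter
  have hsum_const : ∑ _s : Fin d → Bool, ((d:ℝ)*K*Δ/2) ≤ ∑ s : Fin d → Bool, R s := by
    rw [Finset.sum_const, hcard, nsmul_eq_mul]
    push_cast
    exact havg
  obtain ⟨s, -, hs⟩ := Finset.exists_le_of_sum_le Finset.univ_nonempty hsum_const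
  refine ⟨μf s, fun i => ?_, ?_⟩
  · by_cases h : s i <;> simp [hμf, h]
  · have htarget : (d:ℝ) * Real.sqrt ((K:ℝ)*δ) / (8*Real.sqrt 2) = (d:ℝ)*K*Δ/2 := by
      have hKs : Real.sqrt (K:ℝ) ≠ 0 := ne_of_gt (Real.sqrt_pos.mpr hK0)
      have hKK : Real.sqrt (K:ℝ) * Real.sqrt (K:ℝ) = (K:ℝ) := Real.mul_self_sqrt hK0.le
      have h1 : Real.sqrt ((K:ℝ)*δ) = (K:ℝ) * Real.sqrt (δ/(K:ℝ)) := by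
        rw [Real.sqrt_mul (Nat.cast_nonneg K) δ, Real.sqrt_div' δ (Nat.cast_nonneg K)]
        field_simp
        linear_combination hKK
      rw [h1, hΔ]
      field_simp
      ring
    rw [htarget]
    exact hs
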